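/- Let W be a real random variable with E W⁴ < ∞ and E W⁴ > 0. Then inf_{b ∈ ℝ} E|W − b| ≥ (E|W − EW|²)^{3/2} / (5·(E W⁴)^{1/2}). -/

import Mathlib

open MeasureTheory
open scoped ENNReal RealInnerProductSpace Classical

noncomputable section

/-- The outer product `x xᵀ` of a vector in Euclidean space, as a matrix. -/
def outer {d : ℕ} (x : EuclideanSpace ℝ (Fin d)) : Matrix (Fin d) (Fin d) ℝ :=
  Matrix.of fun i j => x i * x j

/-- The trace inner product `⟨A, B⟩ = Tr (A B)` on symmetric matrices. -/
def minner {d : ℕ} (A B : Matrix (Fin d) (Fin d) ℝ) : ℝ :=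
  Matrix.trace (A * B)

/-- The Frobenius norm of a matrix. -/
def frobNorm {d : ℕ} (M : Matrix (Fin d) (Fin d) ℝ) : ℝ :=
  Real.sqrt (∑ i, ∑ j, (M i j) ^ 2)

/-- Entrywise integral of a matrix-valued function. -/
def mIntegral {d : ℕ} (μ : Measure (EuclideanSpace ℝ (Fin d)))
    (F : EuclideanSpace ℝ (Fin d) → Matrix (Fin d) (Fin d) ℝ) :
    Matrix (Fin d) (Fin d) ℝ :=
  Matrix.of fun i j => ∫ x, F x i j ∂μ

/-- The fourth moment operator `T_μ (A) = ∫ ⟨A, xxᵀ⟩ xxᵀ dμ(x)`. -/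
def fourthMomentOp {d : ℕ} (μ : Measure (EuclideanSpace ℝ (Fin d)))
    (A : Matrix (Fin d) (Fin d) ℝ) : Matrix (Fin d) (Fin d) ℝ :=
  mIntegral μ (fun x => minner A (outer x) • outer x)

/-- The second moment matrix `B = ∫ xxᵀ dμ(x)`. -/
def secondMoment {d : ℕ} (μ : Measure (EuclideanSpace ℝ (Fin d))) :
    Matrix (Fin d) (Fin d) ℝ :=
  mIntegral μ outer

/-- `lam : ℕ → ℝ` lists the eigenvalues (with multiplicity) of the fourth moment operator
`T_μ`, viewed as an operator on the `d(d+1)/2`-dimensional inner product space of symmetric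
matrices, in descending order, padded by `0` beyond index `d(d+1)/2`. -/
def IsEigenSeq {d : ℕ} (μ : Measure (EuclideanSpace ℝ (Fin d))) (lam : ℕ → ℝ) : Prop :=
  Antitone lam ∧ (∀ i, d * (d + 1) / 2 ≤ i → lam i = 0) ∧
  ∃ b : Fin (d * (d + 1) / 2) → Matrix (Fin d) (Fin d) ℝ,
    (∀ i, (b i).IsSymm) ∧
    (∀ i j, minner (b i) (b j) = if i = j then 1 else 0) ∧
    (∀ A : Matrix (Fin d) (Fin d) ℝ, A.IsSymm → A ∈ Submodule.span ℝ (Set.range b)) ∧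
    (∀ i : Fin (d * (d + 1) / 2), fourthMomentOp μ (b i) = lam i • b i)

/-- The second order separation parameter `s(μ)`. -/
def sep {d : ℕ} (μ : Measure (EuclideanSpace ℝ (Fin d))) : ℝ :=
  (1 / 2) * sSup { r : ℝ | ∃ μ₁ μ₂ : Measure (EuclideanSpace ℝ (Fin d)),
    IsProbabilityMeasure μ₁ ∧ IsProbabilityMeasure μ₂ ∧
    μ = (2 : ℝ≥0∞)⁻¹ • μ₁ + (2 : ℝ≥0∞)⁻¹ • μ₂ ∧
    r = frobNorm (secondMoment μ₁ - secondMoment μ₂) }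

/-- The standard Gaussian measure `N(0, I)` on `ℝ^d`. -/
def stdGaussian (d : ℕ) : Measure (EuclideanSpace ℝ (Fin d)) :=
  (Measure.pi fun _ : Fin d => ProbabilityTheory.gaussianReal 0 1).map
    (MeasurableEquiv.toLp 2 (Fin d → ℝ))

/-- The centered Gaussian measure `N(0, B)` on `ℝ^d` with positive semidefinite
covariance matrix `B`, obtained as the pushforward of `N(0, I)` by `B^{1/2}`. -/
def gaussianCov {d : ℕ} (B : Matrix (Fin d) (Fin d) ℝ) :
    Measure (EuclideanSpace ℝ (Fin d)) :=
  if hB : B.PosSemidef then (stdGaussian d).map (fun x => Matrix.toEuclideanLin ((hB.1.eigenvectorUnitary : Matrix (Fin d) (Fin d) ℝ) * Matrix.diagonal (fun i => Real.sqrt (hB.1.eigenvalues i)) * (star hB.1.eigenvectorUnitary : Matrix (Fin d) (Fin d) ℝ)) x)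
  else 0

/-- The positive semidefinite square root `B^{1/2}` of a positive semidefinite matrix. -/
def psdSqrt {d : ℕ} (B : Matrix (Fin d) (Fin d) ℝ) : Matrix (Fin d) (Fin d) ℝ :=
  if hB : B.PosSemidef then (hB.1.eigenvectorUnitary : Matrix (Fin d) (Fin d) ℝ) * Matrix.diagonal (fun i => Real.sqrt (hB.1.eigenvalues i)) * (star hB.1.eigenvectorUnitary : Matrix (Fin d) (Fin d) ℝ) else 0


lemma aux_memLp (ν : Measure ℝ) {u : ℝ → ℝ} (hu : AEStronglyMeasurable u ν) {p : ℝ} (hp : 0 < p)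
    (hi : Integrable (fun x => |u x| ^ p) ν) : MemLp u (ENNReal.ofReal p) ν := by
  have hne : ENNReal.ofReal p ≠ 0 := by simp [hp, hp.le]
  have hnt : ENNReal.ofReal p ≠ ⊤ := ENNReal.ofReal_ne_top
  rw [← memLp_norm_rpow_iff hu hne hnt, ENNReal.div_self hne hnt, memLp_one_iff_integrable,
    ENNReal.toReal_ofReal hp.le]
  simpa [Real.norm_eq_abs] using hi

lemma aux_holder (ν : Measure ℝ) {f g : ℝ → ℝ} {p q : ℝ} (hpq : Real.HolderConjugate p q)
    (hf0 : ∀ x, 0 ≤ f x) (hg0 : ∀ x, 0 ≤ g x)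
    (hfm : AEStronglyMeasurable f ν) (hgm : AEStronglyMeasurable g ν)
    (hfi : Integrable (fun x => f x ^ p) ν) (hgi : Integrable (fun x => g x ^ q) ν) :
    ∫ x, f x * g x ∂ν ≤ (∫ x, f x ^ p ∂ν) ^ (1 / p) * (∫ x, g x ^ q ∂ν) ^ (1 / q) := by
  refine integral_mul_le_Lp_mul_Lq_of_nonneg hpq (Filter.Eventually.of_forall hf0)
    (Filter.Eventually.of_forall hg0) ?_ ?_
  · exact aux_memLp ν hfm hpq.pos (by simpa only [abs_of_nonneg (hf0 _)] using hfi)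
  · exact aux_memLp ν hgm hpq.symm.pos (by simpa only [abs_of_nonneg (hg0 _)] using hgi)

lemma aux_cs (ν : Measure ℝ) [IsProbabilityMeasure ν] {f : ℝ → ℝ} (h0 : ∀ x, 0 ≤ f x)
    (hm : AEStronglyMeasurable f ν) (hi : Integrable (fun x => f x ^ 2) ν) :
    ∫ x, f x ∂ν ≤ (∫ x, f x ^ 2 ∂ν) ^ ((1:ℝ)/2) := by
  have hpq : Real.HolderConjugate 2 2 := Real.holderConjugate_iff.mpr ⟨one_lt_two, by norm_num⟩
  have hrp : ∀ x, f x ^ (2:ℝ) = f x ^ 2 := fun x => by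
    rw [show (2:ℝ) = ((2:ℕ):ℝ) by norm_num, Real.rpow_natCast]
  have h := aux_holder ν hpq h0 (fun _ => zero_le_one) hm aestronglyMeasurable_const
    (by simpa only [hrp] using hi) (by simpa using (integrable_const (1:ℝ)))
  simpa [hrp, integral_congr_ae (Filter.Eventually.of_forall (fun x => hrp x))] using h

/-- `inf_b E|W - b| ≥ (E|W - EW|²)^{3/2} / (5 (E W⁴)^{1/2})`, formulated for
the distribution `ν` of the real random variable `W`. -/
theorem median_absolute_deviation_lower_bound
    (ν : Measure ℝ) [IsProbabilityMeasure ν]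
    (h4 : Integrable (fun x : ℝ => x ^ 4) ν) (hpos : 0 < ∫ x, x ^ 4 ∂ν) :
    (∫ x, (x - ∫ y, y ∂ν) ^ 2 ∂ν) ^ ((3 : ℝ) / 2) /
        (5 * (∫ x, x ^ 4 ∂ν) ^ ((1 : ℝ) / 2)) ≤
      ⨅ b : ℝ, ∫ x, |x - b| ∂ν := by
  set m := ∫ x, x ^ 4 ∂ν with hm_def
  set μ0 := ∫ y, y ∂ν with hμ0_def
  set σ2 := ∫ x, (x - μ0) ^ 2 ∂ν with hσ2_def
  have hm : 0 < m := hpos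
  -- integrability facts
  have hI2 : Integrable (fun x : ℝ => x ^ 2) ν := by
    refine (h4.add (integrable_const 1)).mono'
      (continuous_pow 2).aestronglyMeasurable (Filter.Eventually.of_forall fun x => ?_)
    simp only [Pi.add_apply, Real.norm_eq_abs, abs_of_nonneg (sq_nonneg x)]
    nlinarith [sq_nonneg (x ^ 2 - 1)]
  have hI1 : Integrable (fun x : ℝ => x) ν := by
    refine (hI2.add (integrable_const 1)).mono' aestronglyMeasurable_id
      (Filter.Eventually.of_forall fun x => ?_)
    simp only [Pi.add_apply, Real.norm_eq_abs]
    nlinarith [sq_nonneg (|x| - 1), sq_abs x]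
  have hIsub : ∀ b : ℝ, Integrable (fun x => x - b) ν := fun b => hI1.sub (integrable_const b)
  have hIabsb : ∀ b : ℝ, Integrable (fun x => |x - b|) ν := fun b => (hIsub b).abs
  have hI2b : ∀ b : ℝ, Integrable (fun x => (x - b) ^ 2) ν := by
    intro b
    refine ((hI2.const_mul 2).add (integrable_const (2 * b ^ 2))).mono'
      ((continuous_id.sub continuous_const).pow 2).aestronglyMeasurable
      (Filter.Eventually.of_forall fun x => ?_)
    simp only [Pi.add_apply, Real.norm_eq_abs, abs_of_nonneg (sq_nonneg (x - b))]
    nlinarith [sq_nonneg (x + b)]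
  have hpt4 : ∀ b x : ℝ, (x - b) ^ 4 ≤ 8 * x ^ 4 + 8 * b ^ 4 := by
    intro b x
    nlinarith [sq_nonneg (x + b), sq_nonneg (x ^ 2 - b ^ 2), sq_nonneg (x * b),
      sq_nonneg ((x + b) ^ 2), sq_nonneg (x ^ 2 + b ^ 2), sq_nonneg (x - b)]
  have hI4b : ∀ b : ℝ, Integrable (fun x => (x - b) ^ 4) ν := by
    intro b
    refine ((h4.const_mul 8).add (integrable_const (8 * b ^ 4))).mono'
      ((continuous_id.sub continuous_const).pow 4).aestronglyMeasurable
      (Filter.Eventually.of_forall fun x => ?_)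
    have h4n : (0:ℝ) ≤ (x - b) ^ 4 := by positivity
    simp only [Pi.add_apply, Real.norm_eq_abs, abs_of_nonneg h4n]
    exact hpt4 b x
  -- second moment decomposition
  have hdec : ∀ b : ℝ, ∫ x, (x - b) ^ 2 ∂ν = (∫ x, x ^ 2 ∂ν) - 2 * b * μ0 + b ^ 2 := by
    intro b
    have hfun : (fun x : ℝ => (x - b) ^ 2) = fun x => x ^ 2 - 2 * b * x + b ^ 2 := by
      ext x; ring
    have h2b : Integrable (fun x : ℝ => 2 * b * x) ν := hI1.const_mul (2 * b)
    rw [hfun, integral_add (f := fun x : ℝ => x ^ 2 - 2 * b * x) (g := fun _ : ℝ => b ^ 2)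
        (hI2.sub h2b) (integrable_const _),
      integral_sub (f := fun x : ℝ => x ^ 2) (g := fun x : ℝ => 2 * b * x) hI2 h2b,
      integral_const_mul, integral_const]
    simp [← hμ0_def]
  have hσ2eq : σ2 = (∫ x, x ^ 2 ∂ν) - μ0 ^ 2 := by
    rw [hσ2_def, hdec μ0]; ring
  have hσ2le : ∀ b : ℝ, σ2 ≤ ∫ x, (x - b) ^ 2 ∂ν := by
    intro b; rw [hdec b, hσ2eq]; nlinarith [sq_nonneg (μ0 - b)]
  have hσ2nonneg : 0 ≤ σ2 := integral_nonneg fun x => sq_nonneg _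
  -- moment chain
  have hx2m : ∫ x, x ^ 2 ∂ν ≤ m ^ ((1:ℝ)/2) := by
    have h := aux_cs ν (fun x : ℝ => sq_nonneg x) (continuous_pow 2).aestronglyMeasurable
      (by simpa [← pow_mul] using h4)
    calc ∫ x, x ^ 2 ∂ν ≤ (∫ x, (x ^ 2) ^ 2 ∂ν) ^ ((1:ℝ)/2) := h
      _ = m ^ ((1:ℝ)/2) := by norm_num [← pow_mul, ← hm_def]
  have hx2nonneg : (0:ℝ) ≤ ∫ x, x ^ 2 ∂ν := integral_nonneg fun x => sq_nonneg x
  have hμ0c : |μ0| ≤ m ^ ((1:ℝ)/4) := by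
    have h1 : |μ0| ≤ ∫ x, |x| ∂ν := by
      rw [hμ0_def]
      simpa [Real.norm_eq_abs] using norm_integral_le_integral_norm (μ := ν) (fun y : ℝ => y)
    have h2 : ∫ x, |x| ∂ν ≤ (∫ x, x ^ 2 ∂ν) ^ ((1:ℝ)/2) := by
      have := aux_cs ν (fun x : ℝ => abs_nonneg x) continuous_abs.aestronglyMeasurable
        (by simpa [sq_abs] using hI2)
      simpa [sq_abs] using this
    have h3 : (∫ x, x ^ 2 ∂ν) ^ ((1:ℝ)/2) ≤ (m ^ ((1:ℝ)/2)) ^ ((1:ℝ)/2) :=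
      Real.rpow_le_rpow hx2nonneg hx2m (by norm_num)
    have h4' : (m ^ ((1:ℝ)/2)) ^ ((1:ℝ)/2) = m ^ ((1:ℝ)/4) := by
      rw [← Real.rpow_mul hm.le]; norm_num
    linarith
  have hσ2m : σ2 ≤ m ^ ((1:ℝ)/2) := by
    rw [hσ2eq]; nlinarith [sq_nonneg μ0]
  set c := m ^ ((1:ℝ)/4) with hc_def
  have hc0 : 0 < c := Real.rpow_pos_of_pos hm _
  have hc4 : c ^ 4 = m := by
    rw [hc_def, ← Real.rpow_natCast (m ^ ((1:ℝ)/4)) 4, ← Real.rpow_mul hm.le]; norm_num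
  have hm12pos : (0:ℝ) < 5 * m ^ ((1:ℝ)/2) := by positivity
  refine le_ciInf fun b => ?_
  have hfb0 : (0:ℝ) ≤ ∫ x, |x - b| ∂ν := integral_nonneg fun x => abs_nonneg _
  rcases le_or_gt (|b|) (6/5 * c) with hb | hb
  · -- Hölder case
    set fb := ∫ x, |x - b| ∂ν with hfb_def
    set q4 := ∫ x, (x - b) ^ 4 ∂ν with hq4_def
    have hq40 : (0:ℝ) ≤ q4 := integral_nonneg fun x => by positivity
    have hpq : Real.HolderConjugate (3/2) 3 := Real.holderConjugate_iff.mpr ⟨by norm_num, by norm_num⟩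
    have e1 : (fun x : ℝ => (|x - b| ^ ((2:ℝ)/3)) ^ ((3:ℝ)/2)) = fun x => |x - b| := by
      funext x; rw [← Real.rpow_mul (abs_nonneg _)]; norm_num
    have e2 : (fun x : ℝ => (|x - b| ^ ((4:ℝ)/3)) ^ ((3:ℝ))) = fun x => (x - b) ^ 4 := by
      funext x
      rw [← Real.rpow_mul (abs_nonneg _)]
      norm_num
      rw [← abs_pow,
        abs_of_nonneg (by positivity : (0:ℝ) ≤ (x - b) ^ 4)]
    have e0 : (fun x : ℝ => |x - b| ^ ((2:ℝ)/3) * |x - b| ^ ((4:ℝ)/3)) =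
        fun x => (x - b) ^ 2 := by
      funext x
      rw [← Real.rpow_add' (abs_nonneg _) (by norm_num)]
      norm_num [show ((2:ℝ)) = ((2:ℕ):ℝ) from by norm_num, Real.rpow_natCast, sq_abs]
    have hmeas1 : AEStronglyMeasurable (fun x : ℝ => |x - b| ^ ((2:ℝ)/3)) ν :=
      ((continuous_id.sub continuous_const).abs.rpow_const
        (fun x => Or.inr (by norm_num))).aestronglyMeasurable
    have hmeas2 : AEStronglyMeasurable (fun x : ℝ => |x - b| ^ ((4:ℝ)/3)) ν :=
      ((continuous_id.sub continuous_const).abs.rpow_const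
        (fun x => Or.inr (by norm_num))).aestronglyMeasurable
    have key : ∫ x, (x - b) ^ 2 ∂ν ≤ fb ^ ((2:ℝ)/3) * q4 ^ ((1:ℝ)/3) := by
      have h := aux_holder ν hpq (fun x => Real.rpow_nonneg (abs_nonneg _) _)
        (fun x => Real.rpow_nonneg (abs_nonneg _) _) hmeas1 hmeas2
        (by rw [show (fun x : ℝ => (|x - b| ^ ((2:ℝ)/3)) ^ ((3:ℝ)/2)) = fun x => |x - b| from e1]
            exact hIabsb b)
        (by rw [show (fun x : ℝ => (|x - b| ^ ((4:ℝ)/3)) ^ ((3:ℝ))) = fun x => (x - b) ^ 4 from e2]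
            exact hI4b b)
      simp only [e0, e1, e2] at h
      norm_num at h
      convert h using 2 <;> norm_num
    have hfb23 : (fb ^ ((2:ℝ)/3) * q4 ^ ((1:ℝ)/3)) ^ ((3:ℝ)/2) = fb * q4 ^ ((1:ℝ)/2) := by
      rw [Real.mul_rpow (Real.rpow_nonneg hfb0 _) (Real.rpow_nonneg hq40 _),
        ← Real.rpow_mul hfb0, ← Real.rpow_mul hq40]
      norm_num [Real.rpow_one]
    have hq4m : q4 ^ ((1:ℝ)/2) ≤ 5 * m ^ ((1:ℝ)/2) := by
      have hq25 : q4 ≤ 25 * m := by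
        have hmono : q4 ≤ ∫ x, (8 * x ^ 4 + 8 * b ^ 4) ∂ν := by
          refine integral_mono (hI4b b) ((h4.const_mul 8).add (integrable_const (8 * b ^ 4)))
            fun x => ?_
          exact hpt4 b x
        have hval : ∫ x, (8 * x ^ 4 + 8 * b ^ 4) ∂ν = 8 * m + 8 * b ^ 4 := by
          rw [integral_add (f := fun x : ℝ => 8 * x ^ 4) (g := fun _ : ℝ => 8 * b ^ 4)
              (h4.const_mul 8) (integrable_const _), integral_const_mul, integral_const]
          simp [← hm_def]
        have hb4 : b ^ 4 ≤ (6/5 * c) ^ 4 := by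
          calc b ^ 4 = |b| ^ 4 := by rw [← abs_pow, abs_of_nonneg (by positivity : (0:ℝ) ≤ b ^ 4)]
            _ ≤ (6/5 * c) ^ 4 := pow_le_pow_left₀ (abs_nonneg b) hb 4
        have hc4' : (6/5 * c) ^ 4 = 1296/625 * m := by
          rw [mul_pow, hc4]; norm_num
        nlinarith [hm.le]
      calc q4 ^ ((1:ℝ)/2) ≤ (25 * m) ^ ((1:ℝ)/2) :=
            Real.rpow_le_rpow hq40 hq25 (by norm_num)
        _ = 5 * m ^ ((1:ℝ)/2) := by
            rw [Real.mul_rpow (by norm_num) hm.le, show (25:ℝ) = 5 ^ (2:ℕ) by norm_num,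
              ← Real.rpow_natCast (5:ℝ) 2, ← Real.rpow_mul (by norm_num : (0:ℝ) ≤ 5)]
            norm_num
    rw [div_le_iff₀ hm12pos]
    calc σ2 ^ ((3:ℝ)/2) ≤ (fb ^ ((2:ℝ)/3) * q4 ^ ((1:ℝ)/3)) ^ ((3:ℝ)/2) :=
          Real.rpow_le_rpow hσ2nonneg (le_trans (hσ2le b) key)
            (by positivity)
      _ = fb * q4 ^ ((1:ℝ)/2) := hfb23
      _ ≤ fb * (5 * m ^ ((1:ℝ)/2)) := mul_le_mul_of_nonneg_left hq4m hfb0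
  · -- far case
    have hint : ∫ x, (x - b) ∂ν = μ0 - b := by
      rw [integral_sub hI1 (integrable_const b), integral_const]
      simp [← hμ0_def]
    have h1 : |μ0 - b| ≤ ∫ x, |x - b| ∂ν := by
      rw [← hint]
      simpa [Real.norm_eq_abs] using norm_integral_le_integral_norm (μ := ν) (fun x : ℝ => x - b)
    have h2 : c / 5 ≤ |μ0 - b| := by
      have hs : |b| - |μ0| ≤ |μ0 - b| := by
        rw [abs_sub_comm]; exact abs_sub_abs_le_abs_sub b μ0
      have hμc : |μ0| ≤ c := hμ0c
      linarith
    have h3 : σ2 ^ ((3:ℝ)/2) / (5 * m ^ ((1:ℝ)/2)) ≤ c / 5 := by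
      have hs : σ2 ^ ((3:ℝ)/2) ≤ (m ^ ((1:ℝ)/2)) ^ ((3:ℝ)/2) :=
        Real.rpow_le_rpow hσ2nonneg hσ2m (by norm_num)
      have h34 : (m ^ ((1:ℝ)/2)) ^ ((3:ℝ)/2) = m ^ ((3:ℝ)/4) := by
        rw [← Real.rpow_mul hm.le]; norm_num
      have hsplit : m ^ ((3:ℝ)/4) = c * m ^ ((1:ℝ)/2) := by
        rw [hc_def, ← Real.rpow_add hm]; norm_num
      rw [div_le_div_iff₀ hm12pos (by norm_num : (0:ℝ) < 5)]
      calc σ2 ^ ((3:ℝ)/2) * 5 ≤ m ^ ((3:ℝ)/4) * 5 := by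
            rw [← h34]; exact mul_le_mul_of_nonneg_right hs (by norm_num)
        _ = c * (5 * m ^ ((1:ℝ)/2)) := by rw [hsplit]; ring
    linarith

end
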